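/- Let M = {M_u : u ∈ U} be a generalized POVM with respect to J, and let p_u = supp(M_u). Then M is an extreme point of the convex set M_J(A,U) of generalized POVMs if and only if: for any collection {D_u : u ∈ U} with D_u ∈ p_u A p_u, the condition Σ_u D_u ∈ J^⊥ implies D_u = 0 for all u. -/

import Mathlib

open Matrix ComplexOrder
set_option linter.unusedSectionVars false
set_option maxHeartbeats 1600000

variable {n m : Type*} [Fintype n] [DecidableEq n] [Fintype m] [DecidableEq m]

/-- Partial trace over the first tensor factor `B` of `B ⊗ A`,
realized on matrices indexed by products. -/
noncomputable def ptrace (X : Matrix (m × n) (m × n) ℂ) : Matrix n n ℂ :=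
  Matrix.of fun a b => ∑ i, X (i, a) (i, b)

/-- The Choi matrix of a linear map `Φ : A → B` (on full matrix algebras). -/
noncomputable def choi (Φ : Matrix n n ℂ →ₗ[ℂ] Matrix m m ℂ) : Matrix (m × n) (m × n) ℂ :=
  Matrix.of fun p q => Φ (Matrix.single p.2 q.2 1) p.1 q.1

/-- Hilbert–Schmidt orthogonal complement of a subspace. -/
noncomputable def hsPerp {k : Type*} [Fintype k] (J : Submodule ℂ (Matrix k k ℂ)) :
    Submodule ℂ (Matrix k k ℂ) where
  carrier := {x | ∀ a ∈ J, Matrix.trace (aᴴ * x) = 0}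
  add_mem' := by
    intro x y hx hy a ha
    simp [Matrix.mul_add, hx a ha, hy a ha]
  zero_mem' := by intro a ha; simp
  smul_mem' := by
    intro c x hx a ha
    simp [Matrix.mul_smul, hx a ha]

/-- Hilbert–Schmidt orthogonal complement of the transpose `J^T` of a subspace `J`. -/
def hsPerpT {k : Type*} [Fintype k] (J : Submodule ℂ (Matrix k k ℂ)) : Set (Matrix k k ℂ) :=
  {x | ∀ a ∈ J, Matrix.trace (aᵀᴴ * x) = 0}

/-- A subspace is positively generated if it is spanned by its positive elements. -/
def PositivelyGenerated {k : Type*} [Fintype k] (J : Submodule ℂ (Matrix k k ℂ)) : Prop :=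
  J = Submodule.span ℂ {a : Matrix k k ℂ | a ∈ J ∧ a.PosSemidef}

/-- `P` is the support projection of `X`: a Hermitian idempotent with the same range. -/
def IsSupportProj {k : Type*} [Fintype k] [DecidableEq k] (X P : Matrix k k ℂ) : Prop :=
  P.IsHermitian ∧ P * P = P ∧
    LinearMap.range (Matrix.toLin' P) = LinearMap.range (Matrix.toLin' X)

lemma aux_ext {A B : Matrix n n ℂ} (h : ∀ v, A *ᵥ v = B *ᵥ v) : A = B :=
  Matrix.toLin'.injective (LinearMap.ext fun v => by
    simpa [Matrix.toLin'_apply] using h v)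

lemma aux_herm_dot {p : Matrix n n ℂ} (hp : p.IsHermitian) (v u : n → ℂ) :
    star v ⬝ᵥ (p *ᵥ u) = star (p *ᵥ v) ⬝ᵥ u := by
  rw [star_mulVec, hp.eq, dotProduct_mulVec]

section supp
variable {M p : Matrix n n ℂ} (hM : M.PosSemidef) (hp : IsSupportProj M p)

include hp

lemma aux_p_psd : p.PosSemidef := by
  have : p = pᴴ * p := by rw [hp.1.eq, hp.2.1]
  rw [this]
  exact posSemidef_conjTranspose_mul_self p

-- p fixes everything in range M
lemma aux_fix {y : n → ℂ} (hy : ∃ v, M *ᵥ v = y) : p *ᵥ y = y := by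
  obtain ⟨v, hv⟩ := hy
  have : y ∈ LinearMap.range (Matrix.toLin' p) := by
    rw [hp.2.2]
    exact ⟨v, by simp [Matrix.toLin'_apply, hv]⟩
  obtain ⟨z, hz⟩ := this
  rw [Matrix.toLin'_apply] at hz
  rw [← hz, mulVec_mulVec, hp.2.1]

lemma aux_pM : p * M = M := by
  apply aux_ext
  intro v
  rw [← mulVec_mulVec]
  exact aux_fix hp ⟨v, rfl⟩

include hM

lemma aux_Mp : M * p = M := by
  have h := congrArg conjTranspose (aux_pM (M := M) hp)
  rwa [conjTranspose_mul, hp.1.eq, hM.1.eq] at h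

lemma aux_ker {v : n → ℂ} (hv : p *ᵥ v = 0) : M *ᵥ v = 0 := by
  have hMv : p *ᵥ (M *ᵥ v) = M *ᵥ v := aux_fix hp ⟨v, rfl⟩
  have : star v ⬝ᵥ (M *ᵥ v) = 0 := by
    rw [← hMv, aux_herm_dot hp.1, hv]
    simp
  exact (hM.dotProduct_mulVec_zero_iff v).mp this

lemma aux_compress {N : Matrix n n ℂ} (hN : N.IsHermitian)
    (hker : ∀ v, M *ᵥ v = 0 → N *ᵥ v = 0) : p * N * p = N := by
  have hNp : N * p = N := by
    apply aux_ext
    intro v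
    rw [← mulVec_mulVec]
    have h1 : p *ᵥ (v - p *ᵥ v) = 0 := by
      rw [mulVec_sub, mulVec_mulVec, hp.2.1, sub_self]
    have h2 : N *ᵥ (v - p *ᵥ v) = 0 := hker _ (aux_ker hM hp h1)
    rw [mulVec_sub, sub_eq_zero] at h2
    exact h2.symm
  have hpN : p * N = N := by
    have h := congrArg conjTranspose hNp
    rwa [conjTranspose_mul, hp.1.eq, hN.eq] at h
  rw [mul_assoc, hNp, hpN]

end supp


section conj
variable {V : Matrix n n ℂ} (hV : star V * V = 1)

include hV in
lemma aux_conj_mul (A B : Matrix n n ℂ) :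
    (V * A * star V) * (V * B * star V) = V * (A * B) * star V := by
  simp only [Matrix.mul_assoc]
  rw [← Matrix.mul_assoc (star V) V, hV, Matrix.one_mul]

lemma aux_conj_ct (A : Matrix n n ℂ) :
    (V * A * star V)ᴴ = V * Aᴴ * star V := by
  simp only [star_eq_conjTranspose, conjTranspose_mul, conjTranspose_conjTranspose,
    Matrix.mul_assoc]

lemma aux_conj_psd {A : Matrix n n ℂ} (hA : A.PosSemidef) :
    (V * A * star V).PosSemidef := by
  rw [star_eq_conjTranspose]
  exact hA.mul_mul_conjTranspose_same _

lemma aux_conj_sub (A B : Matrix n n ℂ) :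
    V * A * star V - V * B * star V = V * (A - B) * star V := by
  rw [Matrix.mul_sub, Matrix.sub_mul]

lemma aux_conj_add (A B : Matrix n n ℂ) :
    V * A * star V + V * B * star V = V * (A + B) * star V := by
  rw [Matrix.mul_add, Matrix.add_mul]

lemma aux_conj_smul (c : ℂ) (A : Matrix n n ℂ) :
    c • (V * A * star V) = V * (c • A) * star V := by
  rw [Matrix.mul_smul, Matrix.smul_mul]

end conj

lemma aux_diag_psd {f : n → ℝ} (hf : ∀ i, 0 ≤ f i) :
    (Matrix.diagonal (fun i => (f i : ℂ))).PosSemidef :=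
  Matrix.PosSemidef.diagonal fun i => by simpa [Complex.zero_le_real] using hf i

lemma aux_smul_one (c : ℂ) :
    c • (1 : Matrix n n ℂ) = Matrix.diagonal (fun _ => c) := by
  ext i j
  by_cases h : i = j <;> simp [Matrix.diagonal_apply, Matrix.one_apply, h]

/-- bound a Hermitian matrix above and below by multiples of 1 -/
lemma aux_bound {X : Matrix n n ℂ} (hX : X.IsHermitian) :
    ∃ c : ℝ, 0 < c ∧ ((c : ℂ) • 1 - X).PosSemidef ∧ ((c : ℂ) • 1 + X).PosSemidef := by
  set e := hX.eigenvalues with he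
  set V : Matrix n n ℂ := ↑hX.eigenvectorUnitary with hVdef
  have hV : star V * V = 1 := UnitaryGroup.star_mul_self _
  have hV' : V * star V = 1 := Matrix.mem_unitaryGroup_iff.mp hX.eigenvectorUnitary.2
  set c : ℝ := 1 + ∑ i, |e i| with hc
  have hce : ∀ i, |e i| ≤ c - 1 := fun i => by
    have := Finset.single_le_sum (f := fun i => |e i|) (fun j _ => abs_nonneg _)
      (Finset.mem_univ i)
    simp only [hc]; linarith
  have hcpos : 0 < c := by
    have : (0:ℝ) ≤ ∑ i, |e i| := Finset.sum_nonneg fun i _ => abs_nonneg _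
    simp only [hc]; linarith
  have hspec : X = V * diagonal (fun i => ((e i : ℝ) : ℂ)) * star V := by
    conv_lhs => rw [hX.spectral_theorem]
    rfl
  have hsmul1 : (c : ℂ) • (1 : Matrix n n ℂ) = V * diagonal (fun _ => (c:ℂ)) * star V := by
    rw [aux_smul_one]
    conv_lhs => rw [show Matrix.diagonal (fun _ : n => (c:ℂ))
      = (c:ℂ) • (1 : Matrix n n ℂ) from (aux_smul_one _).symm]
    rw [show (1 : Matrix n n ℂ) = V * 1 * star V by rw [Matrix.mul_one, hV'],
      aux_conj_smul, aux_smul_one]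
  refine ⟨c, hcpos, ?_, ?_⟩
  · have key : (c : ℂ) • 1 - X
        = V * diagonal (fun i => ((c - e i : ℝ) : ℂ)) * star V := by
      rw [hspec, hsmul1, aux_conj_sub, diagonal_sub]
      congr 2
      funext i
      push_cast
      ring
    rw [key]
    exact aux_conj_psd (aux_diag_psd fun i => by have := abs_le.mp (hce i); linarith)
  · have key : (c : ℂ) • 1 + X
        = V * diagonal (fun i => ((c + e i : ℝ) : ℂ)) * star V := by
      rw [hspec, hsmul1, aux_conj_add, diagonal_add]
      congr 2
      funext i
      push_cast
      ring
    rw [key]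
    exact aux_conj_psd (aux_diag_psd fun i => by have := abs_le.mp (hce i); linarith)

lemma aux_supp_unique {M p q : Matrix n n ℂ} (hp : IsSupportProj M p)
    (hq : IsSupportProj M q) : p = q := by
  have hpq : p * q = q := by
    apply aux_ext
    intro v
    rw [← mulVec_mulVec]
    apply aux_fix hp
    have : q *ᵥ v ∈ LinearMap.range (Matrix.toLin' M) := by
      rw [← hq.2.2]
      exact ⟨v, by simp [Matrix.toLin'_apply]⟩
    obtain ⟨z, hz⟩ := this
    exact ⟨z, by simpa [Matrix.toLin'_apply] using hz⟩
  have hqp : q * p = p := by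
    apply aux_ext
    intro v
    rw [← mulVec_mulVec]
    apply aux_fix hq
    have : p *ᵥ v ∈ LinearMap.range (Matrix.toLin' M) := by
      rw [← hp.2.2]
      exact ⟨v, by simp [Matrix.toLin'_apply]⟩
    obtain ⟨z, hz⟩ := this
    exact ⟨z, by simpa [Matrix.toLin'_apply] using hz⟩
  have h2 : q * p = q := by
    have := congrArg conjTranspose hpq
    rwa [conjTranspose_mul, hp.1.eq, hq.1.eq] at this
  rw [← hqp, h2]

lemma aux_floor {M p : Matrix n n ℂ} (hM : M.PosSemidef) (hp : IsSupportProj M p) :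
    ∃ c : ℝ, 0 < c ∧ (M - (c : ℂ) • p).PosSemidef := by
  set d := hM.1.eigenvalues with hd
  set V : Matrix n n ℂ := ↑hM.1.eigenvectorUnitary with hVdef
  have hV : star V * V = 1 := UnitaryGroup.star_mul_self _
  have hdnn : ∀ i, 0 ≤ d i := hM.eigenvalues_nonneg
  have hspec : M = V * diagonal (fun i => ((d i : ℝ) : ℂ)) * star V := by
    conv_lhs => rw [hM.1.spectral_theorem]
    rfl
  set g : n → ℝ := fun i => if d i = 0 then 0 else 1 with hg
  set q : Matrix n n ℂ := V * diagonal (fun i => (g i : ℂ)) * star V with hqdef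
  -- q is a support projection of M
  have hqH : q.IsHermitian := by
    unfold Matrix.IsHermitian
    rw [hqdef, aux_conj_ct, diagonal_conjTranspose]
    congr 2
    rw [Matrix.diagonal_eq_diagonal_iff]
    intro i
    simp only [Pi.star_apply, hg]
    split_ifs <;> simp
  have hq2 : q * q = q := by
    rw [hqdef, aux_conj_mul hV, diagonal_mul_diagonal]
    congr 2
    rw [Matrix.diagonal_eq_diagonal_iff]
    intro i
    simp only [hg]
    split_ifs <;> simp
  have hqM : q * M = M := by
    rw [hqdef]
    conv_lhs => rw [hspec]
    conv_rhs => rw [hspec]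
    rw [aux_conj_mul hV, diagonal_mul_diagonal]
    congr 2
    rw [Matrix.diagonal_eq_diagonal_iff]
    intro i
    simp only [hg]
    split_ifs with h <;> simp [h]
  set Minv : Matrix n n ℂ := V * diagonal (fun i => ((if d i = 0 then 0 else (d i)⁻¹ : ℝ) : ℂ)) * star V with hMinvdef
  have hMMinv : M * Minv = q := by
    rw [hMinvdef, hqdef]
    conv_lhs => rw [hspec]
    rw [aux_conj_mul hV, diagonal_mul_diagonal]
    congr 2
    rw [Matrix.diagonal_eq_diagonal_iff]
    intro i
    simp only [hg]
    split_ifs with h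
    · rw [Complex.ofReal_zero, mul_zero]
    · rw [← Complex.ofReal_mul, mul_inv_cancel₀ h]
  have hqrange : LinearMap.range (Matrix.toLin' q) = LinearMap.range (Matrix.toLin' M) := by
    apply le_antisymm
    · rw [← hMMinv, Matrix.toLin'_mul]
      exact LinearMap.range_comp_le_range _ _
    · conv_lhs => rw [← hqM]
      rw [Matrix.toLin'_mul]
      exact LinearMap.range_comp_le_range _ _
  have hq : IsSupportProj M q := ⟨hqH, hq2, hqrange⟩
  have hpq : p = q := aux_supp_unique hp hq
  -- the constant
  have hSpos : ∀ x ∈ insert (1:ℝ) (Finset.univ.image fun i => if d i = 0 then 1 else d i),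
      0 < x := by
    intro x hx
    rw [Finset.mem_insert] at hx
    rcases hx with rfl | hx
    · norm_num
    · obtain ⟨i, _, rfl⟩ := Finset.mem_image.mp hx
      split_ifs with h
      · norm_num
      · exact lt_of_le_of_ne (hdnn i) (Ne.symm h)
  obtain ⟨c, hcS, hcmin⟩ := Finset.exists_min_image
    (insert (1:ℝ) (Finset.univ.image fun i => if d i = 0 then 1 else d i)) id
    ⟨1, Finset.mem_insert_self _ _⟩
  have hcpos : 0 < c := hSpos _ hcS
  have hcle : ∀ i, d i ≠ 0 → c ≤ d i := by
    intro i hi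
    have h2 := hcmin _ (Finset.mem_insert.mpr
      (Or.inr (Finset.mem_image.mpr ⟨i, Finset.mem_univ _, rfl⟩)))
    simp only [id] at h2
    rwa [if_neg hi] at h2
  refine ⟨c, hcpos, ?_⟩
  rw [hpq]
  have key : M - (c:ℂ) • q = V * diagonal (fun i => ((d i - c * g i : ℝ) : ℂ)) * star V := by
    rw [hqdef]
    conv_lhs => rw [hspec]
    rw [aux_conj_smul, aux_conj_sub, ← Matrix.diagonal_smul, Matrix.diagonal_sub]
    congr 2
    rw [Matrix.diagonal_eq_diagonal_iff]
    intro i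
    simp only [Pi.smul_apply, smul_eq_mul]
    push_cast
    ring
  rw [key]
  refine aux_conj_psd (aux_diag_psd fun i => ?_)
  by_cases h : d i = 0
  · simp [hg, h]
  · simp only [hg, if_neg h, mul_one]
    linarith [hcle i h]

lemma aux_smul_real (t : ℝ) (A : Matrix n n ℂ) : t • A = (t : ℂ) • A := by
  ext i j
  simp [Complex.real_smul]

lemma aux_psd_smul {t : ℝ} (ht : 0 ≤ t) {A : Matrix n n ℂ} (hA : A.PosSemidef) :
    (t • A).PosSemidef := by
  rw [aux_smul_real]
  refine .of_dotProduct_mulVec_nonneg ?_ fun x => ?_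
  · unfold Matrix.IsHermitian
    rw [conjTranspose_smul, hA.1]
    congr 1
    simp [Complex.ext_iff]
  · rw [smul_mulVec, dotProduct_smul, smul_eq_mul]
    exact mul_nonneg (by simpa [Complex.zero_le_real] using ht) (hA.dotProduct_mulVec_nonneg x)

lemma aux_psd_csmul {t : ℝ} (ht : 0 ≤ t) {A : Matrix n n ℂ} (hA : A.PosSemidef) :
    ((t : ℂ) • A).PosSemidef := by
  rw [← aux_smul_real]
  exact aux_psd_smul ht hA

lemma aux_pert {M p X : Matrix n n ℂ} (hM : M.PosSemidef) (hp : IsSupportProj M p)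
    (hX : X.IsHermitian) (hXp : p * X * p = X) :
    ∃ t : ℝ, 0 < t ∧ ∀ s : ℝ, |s| ≤ t → (M + (s : ℂ) • X).PosSemidef := by
  obtain ⟨c1, hc1, hfloor⟩ := aux_floor hM hp
  obtain ⟨c2, hc2, hminus, hplus⟩ := aux_bound hX
  have hppsd : p.PosSemidef := aux_p_psd hp
  have hcompress : ∀ A : Matrix n n ℂ, A.PosSemidef → (p * A * p).PosSemidef := by
    intro A hA
    have := hA.mul_mul_conjTranspose_same p
    rwa [hp.1.eq] at this
  have hkeym : p * ((c2:ℂ) • 1 - X) * p = (c2:ℂ) • p - X := by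
    rw [Matrix.mul_sub, Matrix.sub_mul, Matrix.mul_smul, Matrix.mul_one, Matrix.smul_mul,
      hp.2.1, hXp]
  have hkeyp : p * ((c2:ℂ) • 1 + X) * p = (c2:ℂ) • p + X := by
    rw [Matrix.mul_add, Matrix.add_mul, Matrix.mul_smul, Matrix.mul_one, Matrix.smul_mul,
      hp.2.1, hXp]
  have hpm : ((c2:ℂ) • p - X).PosSemidef := hkeym ▸ hcompress _ hminus
  have hpp : ((c2:ℂ) • p + X).PosSemidef := hkeyp ▸ hcompress _ hplus
  refine ⟨c1 / c2, div_pos hc1 hc2, ?_⟩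
  intro s hs
  rcases abs_le.mp hs with ⟨hslo, hshi⟩
  rcases le_or_gt 0 s with hs0 | hs0
  · have hcoef : 0 ≤ c1 - s * c2 := by
      have := (le_div_iff₀ hc2).mp hshi
      linarith
    have hid : M + (s:ℂ) • X
        = (M - (c1:ℂ) • p) + ((s:ℂ) • ((c2:ℂ) • p + X) + ((c1 - s * c2 : ℝ):ℂ) • p) := by
      push_cast
      module
    rw [hid]
    exact hfloor.add ((aux_psd_csmul hs0 hpp).add (aux_psd_csmul hcoef hppsd))
  · have hcoef : 0 ≤ c1 + s * c2 := by
      have h1 : -s ≤ c1 / c2 := by linarith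
      have := (le_div_iff₀ hc2).mp h1
      nlinarith
    have hid : M + (s:ℂ) • X
        = (M - (c1:ℂ) • p) + (((-s : ℝ):ℂ) • ((c2:ℂ) • p - X) + ((c1 + s * c2 : ℝ):ℂ) • p) := by
      push_cast
      module
    rw [hid]
    exact hfloor.add ((aux_psd_csmul (by linarith) hpm).add (aux_psd_csmul hcoef hppsd))

section J
lemma aux_J_star {J : Submodule ℂ (Matrix n n ℂ)} (hJ : PositivelyGenerated J) :
    ∀ a ∈ J, aᴴ ∈ J := by
  let T : Submodule ℂ (Matrix n n ℂ) :=
    { carrier := {x | x ∈ J ∧ xᴴ ∈ J}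
      add_mem' := fun hx hy => ⟨J.add_mem hx.1 hy.1, by
        rw [conjTranspose_add]; exact J.add_mem hx.2 hy.2⟩
      zero_mem' := ⟨J.zero_mem, by simp⟩
      smul_mem' := fun c x hx => ⟨J.smul_mem c hx.1, by
        rw [conjTranspose_smul]; exact J.smul_mem _ hx.2⟩ }
  have hsub : Submodule.span ℂ {a : Matrix n n ℂ | a ∈ J ∧ a.PosSemidef} ≤ T := by
    apply Submodule.span_le.mpr
    rintro x ⟨hxJ, hxpsd⟩
    exact ⟨hxJ, by rw [hxpsd.1.eq]; exact hxJ⟩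
  intro a ha
  have : a ∈ Submodule.span ℂ {a : Matrix n n ℂ | a ∈ J ∧ a.PosSemidef} := by
    rw [← hJ]; exact ha
  exact (hsub this).2
end J

lemma aux_perp_star {k : Type*} [Fintype k] [DecidableEq k] {J : Submodule ℂ (Matrix k k ℂ)}
    (hJ : PositivelyGenerated J) {x : Matrix k k ℂ} (hx : x ∈ hsPerp J) :
    xᴴ ∈ hsPerp J := by
  intro a ha
  have h := hx aᴴ (aux_J_star hJ a ha)
  rw [conjTranspose_conjTranspose] at h
  calc (aᴴ * xᴴ).trace = ((x * a)ᴴ).trace := by rw [conjTranspose_mul]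
    _ = star (x * a).trace := trace_conjTranspose _
    _ = star (a * x).trace := by rw [trace_mul_comm]
    _ = 0 := by rw [h, star_zero]

/-- a generalized POVM `M` w.r.t. `J`, with support projections
`p_u = supp(M_u)`, is an extreme point of the set `M_J(A,U)` of generalized POVMs iff
for every collection `D_u ∈ p_u A p_u`, `Σ_u D_u ∈ J^⊥` implies `D_u = 0` for all `u`. -/
theorem extreme_gPOVM_iff
    (J : Submodule ℂ (Matrix n n ℂ)) (hJ : PositivelyGenerated J)
    (hinv : ∃ a ∈ J, a.PosDef)
    {U : Type*} [Fintype U]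
    (M : U → Matrix n n ℂ) (p : U → Matrix n n ℂ)
    (hM : (∀ u, (M u).PosSemidef) ∧ (∑ u, M u) - 1 ∈ hsPerp J)
    (hp : ∀ u, IsSupportProj (M u) (p u)) :
    M ∈ Set.extremePoints ℝ
        {N : U → Matrix n n ℂ |
          (∀ u, (N u).PosSemidef) ∧ (∑ u, N u) - 1 ∈ hsPerp J} ↔
      ∀ D : U → Matrix n n ℂ, (∀ u, p u * D u * p u = D u) →
        (∑ u, D u) ∈ hsPerp J → ∀ u, D u = 0 := by
  constructor
  · -- extreme point → rigidity
    intro hext D hDp hDperp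
    have hDH : ∀ u, p u * (D u)ᴴ * p u = (D u)ᴴ := by
      intro u
      have h := congrArg conjTranspose (hDp u)
      rw [conjTranspose_mul, conjTranspose_mul, (hp u).1.eq] at h
      rwa [← Matrix.mul_assoc] at h
    have key : ∀ X : U → Matrix n n ℂ, (∀ u, (X u).IsHermitian) →
        (∀ u, p u * X u * p u = X u) → (∑ u, X u) ∈ hsPerp J → ∀ u, X u = 0 := by
      intro X hXh hXp hXperp u0
      haveI : Nonempty U := ⟨u0⟩
      have hpert : ∀ u, ∃ t : ℝ, 0 < t ∧ ∀ s : ℝ, |s| ≤ t →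
          (M u + (s:ℂ) • X u).PosSemidef :=
        fun u => aux_pert (hM.1 u) (hp u) (hXh u) (hXp u)
      choose t ht hts using hpert
      have hTne : (Finset.univ : Finset U).Nonempty := Finset.univ_nonempty
      set T : ℝ := Finset.univ.inf' hTne t with hT
      have hTpos : 0 < T := (Finset.lt_inf'_iff hTne).mpr fun u _ => ht u
      have hTle : ∀ u, T ≤ t u := fun u => Finset.inf'_le _ (Finset.mem_univ u)
      have hN1mem : (fun u => M u + (T:ℂ) • X u) ∈
          {N : U → Matrix n n ℂ |
            (∀ u, (N u).PosSemidef) ∧ (∑ u, N u) - 1 ∈ hsPerp J} := by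
        constructor
        · intro u
          exact hts u T (by rw [abs_of_pos hTpos]; exact hTle u)
        · have hsum : (∑ u, (M u + (T:ℂ) • X u)) - 1
              = ((∑ u, M u) - 1) + (T:ℂ) • ∑ u, X u := by
            rw [Finset.sum_add_distrib, Finset.smul_sum]
            abel
          rw [hsum]
          exact Submodule.add_mem _ hM.2 (Submodule.smul_mem _ _ hXperp)
      have hN2mem : (fun u => M u + ((-T : ℝ):ℂ) • X u) ∈
          {N : U → Matrix n n ℂ |
            (∀ u, (N u).PosSemidef) ∧ (∑ u, N u) - 1 ∈ hsPerp J} := by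
        constructor
        · intro u
          exact hts u (-T) (by rw [abs_neg, abs_of_pos hTpos]; exact hTle u)
        · have hsum : (∑ u, (M u + ((-T : ℝ):ℂ) • X u)) - 1
              = ((∑ u, M u) - 1) + ((-T : ℝ):ℂ) • ∑ u, X u := by
            rw [Finset.sum_add_distrib, Finset.smul_sum]
            abel
          rw [hsum]
          exact Submodule.add_mem _ hM.2 (Submodule.smul_mem _ _ hXperp)
      have hseg : M ∈ openSegment ℝ (fun u => M u + (T:ℂ) • X u)
          (fun u => M u + ((-T : ℝ):ℂ) • X u) := by
        refine ⟨1/2, 1/2, by norm_num, by norm_num, by norm_num, ?_⟩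
        funext u
        simp only [Pi.add_apply, Pi.smul_apply]
        rw [← aux_smul_real T, ← aux_smul_real (-T)]
        module
      have h1 := hext.2 hN1mem hN2mem hseg
      have h2 : M u0 + (T:ℂ) • X u0 = M u0 := congrFun h1 u0
      have h3 : (T:ℂ) • X u0 = 0 := by
        have := h2
        rwa [add_eq_left] at this
      have hTne0 : (T:ℂ) ≠ 0 := Complex.ofReal_ne_zero.mpr (ne_of_gt hTpos)
      exact (smul_eq_zero.mp h3).resolve_left hTne0
    intro u
    have hH := key (fun u => (2:ℂ)⁻¹ • (D u + (D u)ᴴ))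
      (fun u => by
        unfold Matrix.IsHermitian
        rw [conjTranspose_smul, conjTranspose_add, conjTranspose_conjTranspose]
        rw [add_comm ((D u)ᴴ)]
        congr 1
        simp)
      (fun u => by
        rw [Matrix.mul_smul, Matrix.smul_mul, Matrix.mul_add, Matrix.add_mul,
          hDp u, hDH u])
      (by
        have : (∑ u, (2:ℂ)⁻¹ • (D u + (D u)ᴴ))
            = (2:ℂ)⁻¹ • ((∑ u, D u) + (∑ u, D u)ᴴ) := by
          rw [← Finset.smul_sum, Finset.sum_add_distrib, conjTranspose_sum]
        rw [this]
        exact Submodule.smul_mem _ _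
          (Submodule.add_mem _ hDperp (aux_perp_star hJ hDperp)))
      u
    have hK := key (fun u => (-(2:ℂ)⁻¹ * Complex.I) • (D u - (D u)ᴴ))
      (fun u => by
        unfold Matrix.IsHermitian
        rw [conjTranspose_smul, conjTranspose_sub, conjTranspose_conjTranspose]
        have hst : star (-(2:ℂ)⁻¹ * Complex.I) = -(-(2:ℂ)⁻¹ * Complex.I) := by
          simp [Complex.ext_iff]
        rw [hst, neg_smul, ← smul_neg, neg_sub])
      (fun u => by
        rw [Matrix.mul_smul, Matrix.smul_mul, Matrix.mul_sub, Matrix.sub_mul,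
          hDp u, hDH u])
      (by
        have : (∑ u, (-(2:ℂ)⁻¹ * Complex.I) • (D u - (D u)ᴴ))
            = (-(2:ℂ)⁻¹ * Complex.I) • ((∑ u, D u) - (∑ u, D u)ᴴ) := by
          rw [← Finset.smul_sum, Finset.sum_sub_distrib, conjTranspose_sum]
        rw [this]
        exact Submodule.smul_mem _ _
          (Submodule.sub_mem _ hDperp (aux_perp_star hJ hDperp)))
      u
    have h1 : D u + (D u)ᴴ = 0 :=
      (smul_eq_zero.mp hH).resolve_left (by norm_num)
    have h2 : D u - (D u)ᴴ = 0 :=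
      (smul_eq_zero.mp hK).resolve_left (by
        simp [Complex.ext_iff])
    have : (2:ℂ) • D u = 0 := by
      have : (2:ℂ) • D u = (D u + (D u)ᴴ) + (D u - (D u)ᴴ) := by module
      rw [this, h1, h2, add_zero]
    exact (smul_eq_zero.mp this).resolve_left (by norm_num)
  · -- rigidity → extreme point
    intro hcond
    rw [mem_extremePoints]
    refine ⟨hM, ?_⟩
    rintro N₁ hN₁ N₂ hN₂ ⟨a, b, ha, hb, hab, hsum⟩
    have hMu : ∀ u, M u = a • N₁ u + b • N₂ u := by
      intro u
      have := congrFun hsum u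
      simpa using this.symm
    have hker : ∀ (N : U → Matrix n n ℂ), ((∀ u, (N u).PosSemidef)) →
        (∀ u, M u = a • N u + b • N₂ u ∨ M u = a • N₁ u + b • N u) →
        True := fun _ _ _ => trivial
    have hker1 : ∀ u v, M u *ᵥ v = 0 → N₁ u *ᵥ v = 0 ∧ N₂ u *ᵥ v = 0 := by
      intro u v hv
      have h0 : (0:ℂ) = (a:ℂ) * (star v ⬝ᵥ N₁ u *ᵥ v) + (b:ℂ) * (star v ⬝ᵥ N₂ u *ᵥ v) := by
        calc (0:ℂ) = star v ⬝ᵥ M u *ᵥ v := by rw [hv, dotProduct_zero]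
          _ = star v ⬝ᵥ (a • N₁ u + b • N₂ u) *ᵥ v := by rw [← hMu u]
          _ = (a:ℂ) * (star v ⬝ᵥ N₁ u *ᵥ v) + (b:ℂ) * (star v ⬝ᵥ N₂ u *ᵥ v) := by
              rw [Matrix.add_mulVec, dotProduct_add, smul_mulVec, smul_mulVec,
                dotProduct_smul, dotProduct_smul]
              simp [Complex.real_smul]
      have hx1 : 0 ≤ (a:ℂ) * (star v ⬝ᵥ N₁ u *ᵥ v) :=
        mul_nonneg (Complex.zero_le_real.mpr ha.le) ((hN₁.1 u).dotProduct_mulVec_nonneg v)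
      have hx2 : 0 ≤ (b:ℂ) * (star v ⬝ᵥ N₂ u *ᵥ v) :=
        mul_nonneg (Complex.zero_le_real.mpr hb.le) ((hN₂.1 u).dotProduct_mulVec_nonneg v)
      constructor
      · have h3 : (a:ℂ) * (star v ⬝ᵥ N₁ u *ᵥ v) = 0 := by
          apply le_antisymm _ hx1
          calc (a:ℂ) * (star v ⬝ᵥ N₁ u *ᵥ v)
              ≤ (a:ℂ) * (star v ⬝ᵥ N₁ u *ᵥ v) + (b:ℂ) * (star v ⬝ᵥ N₂ u *ᵥ v) :=
                le_add_of_nonneg_right hx2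
            _ = 0 := h0.symm
        have : star v ⬝ᵥ N₁ u *ᵥ v = 0 :=
          (mul_eq_zero.mp h3).resolve_left (Complex.ofReal_ne_zero.mpr (ne_of_gt ha))
        exact ((hN₁.1 u).dotProduct_mulVec_zero_iff v).mp this
      · have h3 : (b:ℂ) * (star v ⬝ᵥ N₂ u *ᵥ v) = 0 := by
          apply le_antisymm _ hx2
          calc (b:ℂ) * (star v ⬝ᵥ N₂ u *ᵥ v)
              ≤ (a:ℂ) * (star v ⬝ᵥ N₁ u *ᵥ v) + (b:ℂ) * (star v ⬝ᵥ N₂ u *ᵥ v) :=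
                le_add_of_nonneg_left hx1
            _ = 0 := h0.symm
        have : star v ⬝ᵥ N₂ u *ᵥ v = 0 :=
          (mul_eq_zero.mp h3).resolve_left (Complex.ofReal_ne_zero.mpr (ne_of_gt hb))
        exact ((hN₂.1 u).dotProduct_mulVec_zero_iff v).mp this
    have hN1eq : N₁ = M := by
      have hD : ∀ u, p u * (N₁ u - M u) * p u = N₁ u - M u := by
        intro u
        apply aux_compress (hM.1 u) (hp u) ((hN₁.1 u).1.sub (hM.1 u).1)
        intro v hv
        rw [Matrix.sub_mulVec, (hker1 u v hv).1, hv, sub_zero]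
      have hDperp : (∑ u, (N₁ u - M u)) ∈ hsPerp J := by
        have heq : (∑ u, (N₁ u - M u)) = ((∑ u, N₁ u) - 1) - ((∑ u, M u) - 1) := by
          rw [Finset.sum_sub_distrib]; abel
        rw [heq]
        exact Submodule.sub_mem _ hN₁.2 hM.2
      funext u
      exact sub_eq_zero.mp (hcond _ hD hDperp u)
    have hN2eq : N₂ = M := by
      have hD : ∀ u, p u * (N₂ u - M u) * p u = N₂ u - M u := by
        intro u
        apply aux_compress (hM.1 u) (hp u) ((hN₂.1 u).1.sub (hM.1 u).1)
        intro v hv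
        rw [Matrix.sub_mulVec, (hker1 u v hv).2, hv, sub_zero]
      have hDperp : (∑ u, (N₂ u - M u)) ∈ hsPerp J := by
        have heq : (∑ u, (N₂ u - M u)) = ((∑ u, N₂ u) - 1) - ((∑ u, M u) - 1) := by
          rw [Finset.sum_sub_distrib]; abel
        rw [heq]
        exact Submodule.sub_mem _ hN₂.2 hM.2
      funext u
      exact sub_eq_zero.mp (hcond _ hD hDperp u)
    exact ⟨hN1eq, hN2eq⟩
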